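/- arXiv:math-ph/0201062 — 6 statements merged into one kernel-verified Lean document; each statement's English description precedes it below -/
import Mathlib

section
/- Each Gaudin Hamiltonian H_i commutes with the total raising operator E = Σ_k E^{(k)} and with the total lowering operator F = Σ_k F^{(k)}. -/
private lemma gaudin_pair_key {A : Type*} [Ring A] [Algebra ℂ A]
    (h e f h' e' f' : A)
    (A1 : h*e - e*h = (2:ℂ)•e) (A1F : h*f - f*h = (-2:ℂ)•f)
    (A2 : h'*e' - e'*h' = (2:ℂ)•e') (A2F : h'*f' - f'*h' = (-2:ℂ)•f')
    (B1 : e*f - f*e = h) (B2 : e'*f' - f'*e' = h')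
    (Che' : h*e' = e'*h) (Chf' : h*f' = f'*h)
    (Ch'e : h'*e = e*h') (Ch'f : h'*f = f*h')
    (Cee' : e*e' = e'*e) (Cef' : e*f' = f'*e) (Ce'f : e'*f = f*e')
    (Cff' : f*f' = f'*f) :
    Commute ((2:ℂ)⁻¹ • (h*h') + e*f' + f*e') (e + e') ∧
    Commute ((2:ℂ)⁻¹ • (h*h') + e*f' + f*e') (f + f') := by
  have half : ∀ x : A, (2:ℂ)⁻¹ • (x + x) = x := fun x => by
    rw [← two_smul ℂ x, smul_smul, inv_mul_cancel₀ (two_ne_zero), one_smul]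
  have hU : (2:ℂ)⁻¹ • (h*h' + ((e*f' + e*f') + (f*e' + f*e')))
      = (2:ℂ)⁻¹ • (h*h') + e*f' + f*e' := by
    rw [smul_add, smul_add, half, half, add_assoc]
  rw [two_smul] at A1 A2
  have A1F' : h*f - f*h = -(f+f) := by rw [A1F, neg_smul, two_smul]
  have A2F' : h'*f' - f'*h' = -(f'+f') := by rw [A2F, neg_smul, two_smul]
  have hE : (h*h' + ((e*f' + e*f') + (f*e' + f*e'))) * (e + e')
      = (e + e') * (h*h' + ((e*f' + e*f') + (f*e' + f*e'))) := by
    linear_combination (norm := noncomm_ring)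
      h * Ch'e + A1 * h' + h * A2 + Che' * h'
      - 2 * (e * Cef') - 2 * (e * B2) + 2 * (Cee' * f')
      - 2 * (f * Cee') - 2 * (B1 * e') - 2 * (Ce'f * e')
  have hF : (h*h' + ((e*f' + e*f') + (f*e' + f*e'))) * (f + f')
      = (f + f') * (h*h' + ((e*f' + e*f') + (f*e' + f*e'))) := by
    linear_combination (norm := noncomm_ring)
      h * Ch'f + A1F' * h' + h * A2F' + Chf' * h'
      - 2 * (e * Cff') + 2 * (B1 * f') + 2 * (Cef' * f')
      + 2 * (f * Ce'f) + 2 * (f * B2) + 2 * (Cff' * e')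
  exact ⟨hU ▸ Commute.smul_left hE _, hU ▸ Commute.smul_left hF _⟩

/-- Each Gaudin Hamiltonian `H_i` commutes with the total raising operator
`Σ_k E^(k)` and with the total lowering operator `Σ_k F^(k)`. -/
theorem gaudin_commutes_with_total_EF {N : ℕ} (A : Type*) [Ring A] [Algebra ℂ A]
    (z : Fin N → ℂ) (hz : Function.Injective z)
    (H E F : Fin N → A)
    (hHEk : ∀ k, H k * E k - E k * H k = (2 : ℂ) • E k)
    (hHFk : ∀ k, H k * F k - F k * H k = (-2 : ℂ) • F k)
    (hEFk : ∀ k, E k * F k - F k * E k = H k)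
    (hcross : ∀ k l, k ≠ l →
      Commute (H k) (H l) ∧ Commute (H k) (E l) ∧ Commute (H k) (F l) ∧
      Commute (E k) (E l) ∧ Commute (E k) (F l) ∧ Commute (F k) (F l)) :
    ∀ i, Commute
        (∑ j ∈ Finset.univ.erase i, (z i - z j)⁻¹ •
          ((2 : ℂ)⁻¹ • (H i * H j) + E i * F j + F i * E j))
        (∑ k, E k) ∧
      Commute
        (∑ j ∈ Finset.univ.erase i, (z i - z j)⁻¹ •
          ((2 : ℂ)⁻¹ • (H i * H j) + E i * F j + F i * E j))
        (∑ k, F k) := by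
  intro i
  -- the key per-pair commutation facts
  have key : ∀ j, j ≠ i →
      Commute ((2:ℂ)⁻¹ • (H i * H j) + E i * F j + F i * E j) (E i + E j) ∧
      Commute ((2:ℂ)⁻¹ • (H i * H j) + E i * F j + F i * E j) (F i + F j) := by
    intro j hji
    have hij : i ≠ j := hji.symm
    obtain ⟨chh, che, chf, cee, cef, cff⟩ := hcross i j hij
    obtain ⟨chh', che', chf', cee', cef', cff'⟩ := hcross j i hji
    exact gaudin_pair_key (H i) (E i) (F i) (H j) (E j) (F j)
      (hHEk i) (hHFk i) (hHEk j) (hHFk j) (hEFk i) (hEFk j)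
      che.eq chf.eq che'.eq chf'.eq cee.eq cef.eq cef'.eq cff.eq
  -- commutation with single operators of distinct index
  have single : ∀ j, j ≠ i → ∀ k, k ≠ i → k ≠ j →
      Commute ((2:ℂ)⁻¹ • (H i * H j) + E i * F j + F i * E j) (E k) ∧
      Commute ((2:ℂ)⁻¹ • (H i * H j) + E i * F j + F i * E j) (F k) := by
    intro j hji k hki hkj
    have hik : i ≠ k := hki.symm
    have hjk : j ≠ k := hkj.symm
    constructor
    · exact (((((hcross i k hik).2.1).mul_left ((hcross j k hjk).2.1)).smul_left _).add_left
        (((hcross k i hki).2.2.2.1.symm).mul_left ((hcross k j hkj).2.2.2.2.1.symm))).add_left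
        ((((hcross k i hki).2.2.2.2.1.symm).symm.symm).mul_left
          ((hcross j k hjk).2.2.2.1))
    · exact (((((hcross i k hik).2.2.1).mul_left ((hcross j k hjk).2.2.1)).smul_left _).add_left
        (((hcross i k hik).2.2.2.2.1).mul_left ((hcross k j hkj).2.2.2.2.2.symm))).add_left
        (((hcross k i hki).2.2.2.2.2.symm).mul_left ((hcross j k hjk).2.2.2.2.1))
  constructor <;>
  · apply Commute.sum_left
    intro j hj
    have hji : j ≠ i := (Finset.mem_erase.mp hj).1
    apply Commute.smul_left
    have hsplit : ∀ G : Fin N → A, (∑ k, G k)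
        = (G i + G j) + ∑ k ∈ (Finset.univ.erase i).erase j, G k := by
      intro G
      rw [add_assoc, Finset.add_sum_erase _ G
        (Finset.mem_erase.mpr ⟨hji, Finset.mem_univ j⟩),
        Finset.add_sum_erase _ G (Finset.mem_univ i)]
    rw [hsplit]
    first
    | exact ((key j hji).1).add_right (Commute.sum_right _ _ _ fun k hk =>
        (single j hji k (Finset.mem_erase.mp (Finset.mem_erase.mp hk).2).1
          (Finset.mem_erase.mp hk).1).1)
    | exact ((key j hji).2).add_right (Commute.sum_right _ _ _ fun k hk =>
        (single j hji k (Finset.mem_erase.mp (Finset.mem_erase.mp hk).2).1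
          (Finset.mem_erase.mp hk).1).2)
end

section
/- The commutator of a Gaudin Hamiltonian with the Bethe operator satisfies [H_i, F(w)] = F(w)·H^{(i)}/(w-z_i) - (F^{(i)}/(w-z_i))·Σ_{k=1}^N H^{(k)}/(w-z_k), where F(w) = Σ_{k=1}^N F^{(k)}/(w-z_k). -/
section aux
variable {A : Type*} [Ring A] [Algebra ℂ A]

lemma gaudin_smul_comm (a b : ℂ) (x y : A) :
    (a • x) * (b • y) - (b • y) * (a • x) = (a * b) • (x * y - y * x) := by
  rw [smul_mul_assoc, smul_mul_assoc, mul_smul_comm, mul_smul_comm, smul_smul, smul_smul,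
    mul_comm b a, smul_sub]

lemma gaudin_aux_i (h e f h' e' f' : A)
    (hhf : h * f - f * h = (-2 : ℂ) • f) (hef : e * f - f * e = h)
    (c1 : h' * f = f * h') (c2 : f' * f = f * f') (c3 : e' * f = f * e') :
    ((2:ℂ)⁻¹ • (h * h') + e * f' + f * e') * f
      - f * ((2:ℂ)⁻¹ • (h * h') + e * f' + f * e') = h * f' - f * h' := by
  have h1 : h * f = (-2:ℂ) • f + f * h := by rw [← hhf]; abel
  have h2 : e * f = h + f * e := by rw [← hef]; abel
  simp only [add_mul, mul_add, smul_mul_assoc, mul_smul_comm, mul_assoc]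
  rw [c1, c2, c3, ← mul_assoc h f h', h1, ← mul_assoc e f f', h2]
  simp only [add_mul, mul_add, smul_mul_assoc, mul_smul_comm, mul_assoc]
  module

lemma gaudin_aux_j (h e f h' e' f' : A)
    (hhf' : h' * f' - f' * h' = (-2 : ℂ) • f') (hef' : e' * f' - f' * e' = h')
    (c1 : h * f' = f' * h) (c2 : e * f' = f' * e) (c3 : f * f' = f' * f) :
    ((2:ℂ)⁻¹ • (h * h') + e * f' + f * e') * f'
      - f' * ((2:ℂ)⁻¹ • (h * h') + e * f' + f * e') = f * h' - h * f' := by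
  have h1 : h' * f' = (-2:ℂ) • f' + f' * h' := by rw [← hhf']; abel
  have h2 : e' * f' = h' + f' * e' := by rw [← hef']; abel
  simp only [add_mul, mul_add, smul_mul_assoc, mul_smul_comm, mul_assoc]
  rw [h1, h2, ← mul_assoc f' h h', ← c1, ← mul_assoc f' e f', ← c2, ← mul_assoc f' f e', ← c3]
  simp only [add_mul, mul_add, smul_mul_assoc, mul_smul_comm, mul_assoc]
  module

end aux

/-- Commutator of a Gaudin Hamiltonian with the Bethe operator:
`[H_i, F(w)] = F(w)·H^(i)/(w-z_i) - (F^(i)/(w-z_i))·Σ_k H^(k)/(w-z_k)`,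
where `F(w) = Σ_k F^(k)/(w-z_k)`. -/
theorem gaudin_bethe_commutator {N : ℕ} (A : Type*) [Ring A] [Algebra ℂ A]
    (z : Fin N → ℂ) (hz : Function.Injective z) (w : ℂ) (hw : ∀ k, w ≠ z k)
    (H E F : Fin N → A)
    (hHEk : ∀ k, H k * E k - E k * H k = (2 : ℂ) • E k)
    (hHFk : ∀ k, H k * F k - F k * H k = (-2 : ℂ) • F k)
    (hEFk : ∀ k, E k * F k - F k * E k = H k)
    (hcross : ∀ k l, k ≠ l →
      Commute (H k) (H l) ∧ Commute (H k) (E l) ∧ Commute (H k) (F l) ∧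
      Commute (E k) (E l) ∧ Commute (E k) (F l) ∧ Commute (F k) (F l)) :
    ∀ i,
      (∑ j ∈ Finset.univ.erase i, (z i - z j)⁻¹ •
          ((2 : ℂ)⁻¹ • (H i * H j) + E i * F j + F i * E j)) *
        (∑ k, (w - z k)⁻¹ • F k) -
      (∑ k, (w - z k)⁻¹ • F k) *
        (∑ j ∈ Finset.univ.erase i, (z i - z j)⁻¹ •
          ((2 : ℂ)⁻¹ • (H i * H j) + E i * F j + F i * E j)) =
      (∑ k, (w - z k)⁻¹ • F k) * ((w - z i)⁻¹ • H i) -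
        ((w - z i)⁻¹ • F i) * (∑ k, (w - z k)⁻¹ • H k) := by
  intro i
  have hwz : ∀ k, w - z k ≠ 0 := fun k => sub_ne_zero.mpr (hw k)
  -- the common middle expression
  have hL :
      (∑ j ∈ Finset.univ.erase i, (z i - z j)⁻¹ •
          ((2 : ℂ)⁻¹ • (H i * H j) + E i * F j + F i * E j)) *
        (∑ k, (w - z k)⁻¹ • F k) -
      (∑ k, (w - z k)⁻¹ • F k) *
        (∑ j ∈ Finset.univ.erase i, (z i - z j)⁻¹ •
          ((2 : ℂ)⁻¹ • (H i * H j) + E i * F j + F i * E j)) =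
      ∑ j ∈ Finset.univ.erase i,
        ((w - z i)⁻¹ * (w - z j)⁻¹) • (H i * F j - F i * H j) := by
    rw [Finset.sum_mul, Finset.mul_sum, ← Finset.sum_sub_distrib]
    refine Finset.sum_congr rfl ?_
    intro j hj
    have hji : j ≠ i := Finset.ne_of_mem_erase hj
    have hij : i ≠ j := hji.symm
    have hzz : z i - z j ≠ 0 := sub_ne_zero.mpr (fun hh => hji (hz hh).symm)
    rw [Finset.mul_sum, Finset.sum_mul, ← Finset.sum_sub_distrib]
    -- only k = i and k = j contribute
    have hvanish : ∀ k ∈ (Finset.univ : Finset (Fin N)), k ∉ ({i, j} : Finset (Fin N)) →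
        ((z i - z j)⁻¹ • ((2 : ℂ)⁻¹ • (H i * H j) + E i * F j + F i * E j)) *
          ((w - z k)⁻¹ • F k) -
        ((w - z k)⁻¹ • F k) *
          ((z i - z j)⁻¹ • ((2 : ℂ)⁻¹ • (H i * H j) + E i * F j + F i * E j)) = 0 := by
      intro k _ hk
      simp only [Finset.mem_insert, Finset.mem_singleton, not_or] at hk
      obtain ⟨hki, hkj⟩ := hk
      have hik : i ≠ k := fun hh => hki hh.symm
      have hjk : j ≠ k := fun hh => hkj hh.symm
      have hc : Commute ((2 : ℂ)⁻¹ • (H i * H j) + E i * F j + F i * E j) (F k) := by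
        refine Commute.add_left (Commute.add_left ?_ ?_) ?_
        · exact (((hcross i k hik).2.2.1).mul_left ((hcross j k hjk).2.2.1)).smul_left _
        · exact ((hcross i k hik).2.2.2.2.1).mul_left ((hcross j k hjk).2.2.2.2.2)
        · exact ((hcross i k hik).2.2.2.2.2).mul_left ((hcross j k hjk).2.2.2.2.1)
      exact sub_eq_zero_of_eq ((hc.smul_left _).smul_right _).eq
    rw [← Finset.sum_subset (Finset.subset_univ ({i, j} : Finset (Fin N))) hvanish,
      Finset.sum_pair hij]
    rw [gaudin_smul_comm, gaudin_smul_comm]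
    rw [gaudin_aux_i (H i) (E i) (F i) (H j) (E j) (F j) (hHFk i) (hEFk i)
        ((hcross j i hji).2.2.1).eq ((hcross j i hji).2.2.2.2.2).eq
        ((hcross j i hji).2.2.2.2.1).eq]
    rw [gaudin_aux_j (H i) (E i) (F i) (H j) (E j) (F j) (hHFk j) (hEFk j)
        ((hcross i j hij).2.2.1).eq ((hcross i j hij).2.2.2.2.1).eq
        ((hcross i j hij).2.2.2.2.2).eq]
    have hs : (z i - z j)⁻¹ * (w - z i)⁻¹ - (z i - z j)⁻¹ * (w - z j)⁻¹
        = (w - z i)⁻¹ * (w - z j)⁻¹ := by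
      rw [← mul_sub, inv_sub_inv (hwz i) (hwz j),
        show w - z j - (w - z i) = z i - z j by ring,
        div_eq_mul_inv, ← mul_assoc, inv_mul_cancel₀ hzz, one_mul, mul_inv]
    rw [show F i * H j - H i * F j = -(H i * F j - F i * H j) from (neg_sub _ _).symm,
      smul_neg, ← sub_eq_add_neg, ← sub_smul, hs]
  have hR :
      (∑ k, (w - z k)⁻¹ • F k) * ((w - z i)⁻¹ • H i) -
        ((w - z i)⁻¹ • F i) * (∑ k, (w - z k)⁻¹ • H k) =
      ∑ j ∈ Finset.univ.erase i,
        ((w - z i)⁻¹ * (w - z j)⁻¹) • (H i * F j - F i * H j) := by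
    rw [Finset.sum_mul, Finset.mul_sum, ← Finset.sum_sub_distrib,
      ← Finset.sum_erase_add Finset.univ _ (Finset.mem_univ i)]
    rw [show ((w - z i)⁻¹ • F i) * ((w - z i)⁻¹ • H i) -
        ((w - z i)⁻¹ • F i) * ((w - z i)⁻¹ • H i) = 0 from sub_self _, add_zero]
    refine Finset.sum_congr rfl ?_
    intro j hj
    have hji : j ≠ i := Finset.ne_of_mem_erase hj
    have hij : i ≠ j := hji.symm
    have hcFH : F j * H i = H i * F j := ((hcross i j hij).2.2.1).eq.symm
    rw [smul_mul_assoc, smul_mul_assoc, mul_smul_comm, mul_smul_comm, smul_smul, smul_smul,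
      hcFH, mul_comm ((w - z j)⁻¹) ((w - z i)⁻¹), ← smul_sub]
  rw [hL, hR]
end

section
/- The double commutator [[H_i, F(w_1)], F(w_2)] equals (2/(w_1-w_2)) · ( (F^{(i)}/(w_1-z_i)) F(w_2) - (F^{(i)}/(w_2-z_i)) F(w_1) ). -/
private def Com {A : Type*} [Ring A] (a b : A) : A := a * b - b * a

private lemma Com_sum_left {A : Type*} [Ring A] {ι : Type*} (s : Finset ι) (f : ι → A) (b : A) :
    Com (∑ i ∈ s, f i) b = ∑ i ∈ s, Com (f i) b := by
  simp [Com, Finset.sum_mul, Finset.mul_sum, Finset.sum_sub_distrib]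

private lemma Com_sum_right {A : Type*} [Ring A] {ι : Type*} (s : Finset ι) (f : ι → A) (a : A) :
    Com a (∑ i ∈ s, f i) = ∑ i ∈ s, Com a (f i) := by
  simp [Com, Finset.sum_mul, Finset.mul_sum, Finset.sum_sub_distrib]

private lemma Com_smul_left {A : Type*} [Ring A] [Algebra ℂ A] (c : ℂ) (a b : A) :
    Com (c • a) b = c • Com a b := by
  simp [Com, smul_mul_assoc, mul_smul_comm, smul_sub]

private lemma Com_smul_right {A : Type*} [Ring A] [Algebra ℂ A] (c : ℂ) (a b : A) :
    Com a (c • b) = c • Com a b := by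
  simp [Com, smul_mul_assoc, mul_smul_comm, smul_sub]

private lemma Com_add_left {A : Type*} [Ring A] (a a' b : A) :
    Com (a + a') b = Com a b + Com a' b := by
  simp only [Com, add_mul, mul_add]; abel

private lemma Com_sub_left {A : Type*} [Ring A] (a a' b : A) :
    Com (a - a') b = Com a b - Com a' b := by
  simp only [Com, sub_mul, mul_sub]; abel

private lemma Com_mul_left {A : Type*} [Ring A] (a b c : A) :
    Com (a * b) c = a * Com b c + Com a c * b := by
  simp only [Com, mul_sub, sub_mul, mul_assoc]; abel

/-- The double commutator `[[H_i, F(w_1)], F(w_2)]` equals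
`(2/(w_1-w_2)) ((F^(i)/(w_1-z_i)) F(w_2) - (F^(i)/(w_2-z_i)) F(w_1))`. -/
theorem gaudin_double_commutator {N : ℕ} (A : Type*) [Ring A] [Algebra ℂ A]
    (z : Fin N → ℂ) (hz : Function.Injective z)
    (w₁ w₂ : ℂ) (hw₁ : ∀ k, w₁ ≠ z k) (hw₂ : ∀ k, w₂ ≠ z k) (hw : w₁ ≠ w₂)
    (H E F : Fin N → A)
    (hHEk : ∀ k, H k * E k - E k * H k = (2 : ℂ) • E k)
    (hHFk : ∀ k, H k * F k - F k * H k = (-2 : ℂ) • F k)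
    (hEFk : ∀ k, E k * F k - F k * E k = H k)
    (hcross : ∀ k l, k ≠ l →
      Commute (H k) (H l) ∧ Commute (H k) (E l) ∧ Commute (H k) (F l) ∧
      Commute (E k) (E l) ∧ Commute (E k) (F l) ∧ Commute (F k) (F l)) :
    ∀ i,
      ((∑ j ∈ Finset.univ.erase i, (z i - z j)⁻¹ •
            ((2 : ℂ)⁻¹ • (H i * H j) + E i * F j + F i * E j)) *
          (∑ k, (w₁ - z k)⁻¹ • F k) -
        (∑ k, (w₁ - z k)⁻¹ • F k) *
          (∑ j ∈ Finset.univ.erase i, (z i - z j)⁻¹ •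
            ((2 : ℂ)⁻¹ • (H i * H j) + E i * F j + F i * E j))) *
        (∑ k, (w₂ - z k)⁻¹ • F k) -
      (∑ k, (w₂ - z k)⁻¹ • F k) *
        ((∑ j ∈ Finset.univ.erase i, (z i - z j)⁻¹ •
            ((2 : ℂ)⁻¹ • (H i * H j) + E i * F j + F i * E j)) *
          (∑ k, (w₁ - z k)⁻¹ • F k) -
        (∑ k, (w₁ - z k)⁻¹ • F k) *
          (∑ j ∈ Finset.univ.erase i, (z i - z j)⁻¹ •
            ((2 : ℂ)⁻¹ • (H i * H j) + E i * F j + F i * E j))) =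
      (2 / (w₁ - w₂)) •
        (((w₁ - z i)⁻¹ • F i) * (∑ k, (w₂ - z k)⁻¹ • F k) -
          ((w₂ - z i)⁻¹ • F i) * (∑ k, (w₁ - z k)⁻¹ • F k)) := by
  intro i
  have h1 : ∀ k, w₁ - z k ≠ 0 := fun k => sub_ne_zero.2 (hw₁ k)
  have h2 : ∀ k, w₂ - z k ≠ 0 := fun k => sub_ne_zero.2 (hw₂ k)
  have h12 : w₁ - w₂ ≠ 0 := sub_ne_zero.2 hw
  have hzi : ∀ j, j ≠ i → z i - z j ≠ 0 := fun j hj =>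
    sub_ne_zero.2 fun h => hj (hz h).symm
  have cHF : ∀ k, Com (H k) (F k) = (-2 : ℂ) • F k := fun k => hHFk k
  have cEF : ∀ k, Com (E k) (F k) = H k := fun k => hEFk k
  have cHFc : ∀ k l, k ≠ l → Com (H k) (F l) = 0 := fun k l h =>
    sub_eq_zero_of_eq (hcross k l h).2.2.1.eq
  have cEFc : ∀ k l, k ≠ l → Com (E k) (F l) = 0 := fun k l h =>
    sub_eq_zero_of_eq (hcross k l h).2.2.2.2.1.eq
  have cFF : ∀ k l, Com (F k) (F l) = 0 := by
    intro k l
    rcases eq_or_ne k l with rfl | h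
    · simp [Com]
    · exact sub_eq_zero_of_eq (hcross k l h).2.2.2.2.2.eq
  -- commutator of one Gaudin summand with a single F l
  have hΩ : ∀ j l, j ≠ i →
      Com ((2 : ℂ)⁻¹ • (H i * H j) + E i * F j + F i * E j) (F l) =
        (if l = i then H i * F j - F i * H j else 0) +
        (if l = j then F i * H j - H i * F j else 0) := by
    intro j l hj
    rw [Com_add_left, Com_add_left, Com_smul_left, Com_mul_left, Com_mul_left, Com_mul_left]
    rcases eq_or_ne l i with rfl | hli
    · rw [cHFc j l hj, cHF l, cFF, cEF l, cEFc j l hj, cFF,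
        if_pos rfl, if_neg (fun h : l = j => hj h.symm)]
      simp only [mul_zero, smul_mul_assoc, zero_mul, smul_smul, smul_add, add_zero, zero_add,
        smul_zero]
      norm_num
      abel
    · rcases eq_or_ne l j with rfl | hlj
      · rw [cHF l, cHFc i l (fun h => hli h.symm), cFF, cEFc i l (fun h => hli h.symm),
          cEF l, cFF, if_neg hli, if_pos rfl]
        simp only [mul_smul_comm, zero_mul, smul_smul, smul_add, add_zero, zero_add,
          smul_zero, mul_zero]
        norm_num
        abel
      · rw [cHFc j l (fun h => hlj h.symm), cHFc i l (fun h => hli h.symm), cFF,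
          cEFc i l (fun h => hli h.symm), cEFc j l (fun h => hlj h.symm), cFF,
          if_neg hli, if_neg hlj]
        simp
  -- Step A : first commutator
  have stepA : ∀ w : ℂ, (∀ k, w - z k ≠ 0) →
      Com (∑ j ∈ Finset.univ.erase i, (z i - z j)⁻¹ •
          ((2 : ℂ)⁻¹ • (H i * H j) + E i * F j + F i * E j)) (∑ k, (w - z k)⁻¹ • F k)
      = ∑ j ∈ Finset.univ.erase i,
          ((w - z i)⁻¹ * (w - z j)⁻¹) • (H i * F j - F i * H j) := by
    intro w hwz
    rw [Com_sum_left]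
    refine Finset.sum_congr rfl fun j hj => ?_
    have hji : j ≠ i := (Finset.mem_erase.1 hj).1
    rw [Com_smul_left, Com_sum_right]
    have e : ∀ l, Com ((2 : ℂ)⁻¹ • (H i * H j) + E i * F j + F i * E j) ((w - z l)⁻¹ • F l)
        = (if l = i then (w - z l)⁻¹ • (H i * F j - F i * H j) else 0) +
          (if l = j then (w - z l)⁻¹ • (F i * H j - H i * F j) else 0) := by
      intro l
      rw [Com_smul_right, hΩ j l hji, smul_add, smul_ite_zero, smul_ite_zero]
    rw [Finset.sum_congr rfl fun l _ => e l, Finset.sum_add_distrib,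
      Finset.sum_ite_eq' Finset.univ i, Finset.sum_ite_eq' Finset.univ j,
      if_pos (Finset.mem_univ i), if_pos (Finset.mem_univ j)]
    rw [show F i * H j - H i * F j = -(H i * F j - F i * H j) from (neg_sub _ _).symm,
      smul_neg, ← sub_eq_add_neg, ← sub_smul, smul_smul]
    have hij := hzi j hji
    have hwi := hwz i
    have hwj := hwz j
    congr 1
    field_simp
    ring
  -- Step B : second commutator of a single summand
  have stepB : ∀ k, k ≠ i →
      Com (H i * F k - F i * H k) (∑ l, (w₂ - z l)⁻¹ • F l)
        = ((-2) * (w₂ - z i)⁻¹ + 2 * (w₂ - z k)⁻¹) • (F i * F k) := by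
    intro k hk
    rw [Com_sum_right]
    have e : ∀ l, Com (H i * F k - F i * H k) ((w₂ - z l)⁻¹ • F l)
        = (if l = i then ((w₂ - z l)⁻¹ * (-2 : ℂ)) • (F i * F k) else 0) +
          (if l = k then ((w₂ - z l)⁻¹ * (2 : ℂ)) • (F i * F k) else 0) := by
      intro l
      rw [Com_smul_right, Com_sub_left, Com_mul_left, Com_mul_left]
      rcases eq_or_ne l i with rfl | hli
      · rw [cFF, cHF l, cHFc k l hk, cFF, if_pos rfl, if_neg (fun h : l = k => hk h.symm)]
        simp only [mul_zero, zero_mul, smul_mul_assoc, add_zero, zero_add, smul_smul,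
          smul_sub, smul_zero, sub_zero]
        try rw [mul_comm]
      · rcases eq_or_ne l k with rfl | hlk
        · rw [cFF, cHFc i l (fun h => hli h.symm), cHF l, cFF, if_neg hli, if_pos rfl]
          simp only [mul_zero, zero_mul, mul_smul_comm, add_zero, zero_add, smul_smul,
            smul_sub, smul_zero, zero_sub, smul_neg]
          rw [show (w₂ - z l)⁻¹ * (-2 : ℂ) = -((w₂ - z l)⁻¹ * 2) by ring]
          rw [neg_smul]
          abel
        · rw [cFF, cHFc i l (fun h => hli h.symm), cHFc k l (fun h => hlk h.symm), cFF,
            if_neg hli, if_neg hlk]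
          simp
    rw [Finset.sum_congr rfl fun l _ => e l, Finset.sum_add_distrib,
      Finset.sum_ite_eq' Finset.univ i, Finset.sum_ite_eq' Finset.univ k,
      if_pos (Finset.mem_univ i), if_pos (Finset.mem_univ k), ← add_smul]
    congr 1
    ring
  -- assemble
  show Com (Com (∑ j ∈ Finset.univ.erase i, (z i - z j)⁻¹ •
            ((2 : ℂ)⁻¹ • (H i * H j) + E i * F j + F i * E j))
        (∑ k, (w₁ - z k)⁻¹ • F k)) (∑ k, (w₂ - z k)⁻¹ • F k) =
      (2 / (w₁ - w₂)) •
        (((w₁ - z i)⁻¹ • F i) * (∑ k, (w₂ - z k)⁻¹ • F k) -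
          ((w₂ - z i)⁻¹ • F i) * (∑ k, (w₁ - z k)⁻¹ • F k))
  rw [stepA w₁ h1, Com_sum_left]
  have eL : ∀ k ∈ Finset.univ.erase i,
      Com (((w₁ - z i)⁻¹ * (w₁ - z k)⁻¹) • (H i * F k - F i * H k)) (∑ l, (w₂ - z l)⁻¹ • F l)
        = (((w₁ - z i)⁻¹ * (w₁ - z k)⁻¹) * ((-2) * (w₂ - z i)⁻¹ + 2 * (w₂ - z k)⁻¹)) •
            (F i * F k) := fun k hk => by
    rw [Com_smul_left, stepB k (Finset.mem_erase.1 hk).1, smul_smul]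
  rw [Finset.sum_congr rfl eL]
  -- expand the RHS
  have hR : (2 / (w₁ - w₂)) •
        (((w₁ - z i)⁻¹ • F i) * (∑ k, (w₂ - z k)⁻¹ • F k) -
          ((w₂ - z i)⁻¹ • F i) * (∑ k, (w₁ - z k)⁻¹ • F k))
      = ∑ k, ((2 / (w₁ - w₂)) *
          ((w₁ - z i)⁻¹ * (w₂ - z k)⁻¹ - (w₂ - z i)⁻¹ * (w₁ - z k)⁻¹)) • (F i * F k) := by
    rw [Finset.mul_sum, Finset.mul_sum, ← Finset.sum_sub_distrib, Finset.smul_sum]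
    refine Finset.sum_congr rfl fun k _ => ?_
    rw [smul_mul_assoc, mul_smul_comm, smul_smul, smul_mul_assoc, mul_smul_comm, smul_smul,
      ← sub_smul, smul_smul, mul_sub]
  have h0 : (2 / (w₁ - w₂) *
      ((w₁ - z i)⁻¹ * (w₂ - z i)⁻¹ - (w₂ - z i)⁻¹ * (w₁ - z i)⁻¹)) • (F i * F i) = (0 : A) := by
    rw [show (w₁ - z i)⁻¹ * (w₂ - z i)⁻¹ - (w₂ - z i)⁻¹ * (w₁ - z i)⁻¹ = (0 : ℂ) by ring]
    simp
  rw [hR, ← Finset.sum_erase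
    (f := fun k => (2 / (w₁ - w₂) *
      ((w₁ - z i)⁻¹ * (w₂ - z k)⁻¹ - (w₂ - z i)⁻¹ * (w₁ - z k)⁻¹)) • (F i * F k))
    Finset.univ h0]
  refine Finset.sum_congr rfl fun k hk => ?_
  have hw1i := h1 i
  have hw2i := h2 i
  have hw1k := h1 k
  have hw2k := h2 k
  congr 1
  field_simp
  ring
end

section
/- If the Bethe equation Σ_{k=1}^N λ_k/(w - z_k) = 0 holds, then the vector ψ_1(w) = Σ_{k=1}^N F^{(k)} v_0 / (w - z_k) satisfies H_i ψ_1(w) = s_i^1 ψ_1(w) for every i, where s_i^1 = (1/2) Σ_{j≠i} λ_i λ_j/(z_i - z_j) + λ_i/(w - z_i). -/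
open Finset

/-- If the Bethe equation `Σ_k λ_k/(w-z_k) = 0` holds, then the Bethe vector
`ψ_1(w) = Σ_k F^(k) v_0/(w-z_k)` is a common eigenvector of all Gaudin
Hamiltonians, with eigenvalue
`s_i^1 = (1/2) Σ_{j≠i} λ_i λ_j/(z_i-z_j) + λ_i/(w-z_i)`. -/
theorem bethe_vector_one_eigenvector {N : ℕ} (Ω : Type*) [AddCommGroup Ω] [Module ℂ Ω]
    (z : Fin N → ℂ) (hz : Function.Injective z) (w : ℂ) (hw : ∀ k, w ≠ z k)
    (lam : Fin N → ℂ) (v₀ : Ω)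
    (H E F : Fin N → Module.End ℂ Ω)
    (hHEk : ∀ k, H k * E k - E k * H k = (2 : ℂ) • E k)
    (hHFk : ∀ k, H k * F k - F k * H k = (-2 : ℂ) • F k)
    (hEFk : ∀ k, E k * F k - F k * E k = H k)
    (hcross : ∀ k l, k ≠ l →
      Commute (H k) (H l) ∧ Commute (H k) (E l) ∧ Commute (H k) (F l) ∧
      Commute (E k) (E l) ∧ Commute (E k) (F l) ∧ Commute (F k) (F l))
    (hHv : ∀ k, H k v₀ = lam k • v₀)
    (hEv : ∀ k, E k v₀ = 0)
    (hBethe : ∑ k, lam k / (w - z k) = 0) :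
    ∀ i, (∑ j ∈ Finset.univ.erase i, (z i - z j)⁻¹ •
        ((2 : ℂ)⁻¹ • (H i * H j) + E i * F j + F i * E j))
        (∑ k, (w - z k)⁻¹ • F k v₀) =
      ((2 : ℂ)⁻¹ * (∑ j ∈ Finset.univ.erase i, lam i * lam j / (z i - z j)) +
          lam i / (w - z i)) •
        (∑ k, (w - z k)⁻¹ • F k v₀) := by
  intro i
  classical
  have hwz : ∀ k, w - z k ≠ 0 := fun k => sub_ne_zero.mpr (hw k)
  have hzz : ∀ j, j ≠ i → z i - z j ≠ 0 := fun j hj =>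
    sub_ne_zero.mpr fun h => hj (hz h).symm
  -- basic action lemmas
  have hHF : ∀ m k, H m (F k v₀) = (lam m - if m = k then 2 else 0) • F k v₀ := by
    intro m k
    by_cases h : m = k
    · subst h
      have h1 := congrArg (fun f : Module.End ℂ Ω => f v₀) (hHFk m)
      simp only [LinearMap.sub_apply, Module.End.mul_apply, LinearMap.smul_apply] at h1
      rw [hHv, map_smul] at h1
      have h2 := eq_add_of_sub_eq h1
      rw [h2, if_pos rfl]
      module
    · have h1 : (H m * F k) v₀ = (F k * H m) v₀ := by rw [((hcross m k h).2.2.1).eq]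
      simp only [Module.End.mul_apply] at h1
      rw [hHv, map_smul] at h1
      rw [h1, if_neg h, sub_zero]
  have hEF : ∀ m k, E m (F k v₀) = if m = k then lam k • v₀ else 0 := by
    intro m k
    by_cases h : m = k
    · subst h
      have h1 := congrArg (fun f : Module.End ℂ Ω => f v₀) (hEFk m)
      simp only [LinearMap.sub_apply, Module.End.mul_apply] at h1
      rw [hEv, map_zero, sub_zero, hHv] at h1
      rw [if_pos rfl]; exact h1
    · have h1 : (E m * F k) v₀ = (F k * E m) v₀ := by rw [((hcross m k h).2.2.2.2.1).eq]
      simp only [Module.End.mul_apply] at h1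
      rw [hEv, map_zero] at h1
      rw [if_neg h]; exact h1
  -- action of one Gaudin summand on F k v₀
  have hG : ∀ j, j ≠ i → ∀ k,
      ((2 : ℂ)⁻¹ • (H i * H j) + E i * F j + F i * E j) (F k v₀)
      = ((2 : ℂ)⁻¹ * ((lam i - if i = k then 2 else 0) * (lam j - if j = k then 2 else 0)))
          • F k v₀
        + (if i = k then lam k • F j v₀ else 0)
        + (if j = k then lam k • F i v₀ else 0) := by
    intro j hj k
    simp only [LinearMap.add_apply, LinearMap.smul_apply, Module.End.mul_apply]
    have h1 : E i (F j (F k v₀)) = if i = k then lam k • F j v₀ else 0 := by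
      have h2 : (E i * F j) (F k v₀) = (F j * E i) (F k v₀) := by
        rw [((hcross i j fun h => hj h.symm).2.2.2.2.1).eq]
      simp only [Module.End.mul_apply] at h2
      rw [h2, hEF i k, apply_ite (F j), map_smul, map_zero]
    have h2 : F i (E j (F k v₀)) = if j = k then lam k • F i v₀ else 0 := by
      rw [hEF j k, apply_ite (F i), map_smul, map_zero]
    rw [hHF j k, map_smul, hHF i k, h1, h2]
    by_cases hik : i = k <;> by_cases hjk : j = k
    · exact absurd (hjk.trans hik.symm) hj
    · simp only [if_pos hik, if_neg hjk, add_zero]; module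
    · simp only [if_neg hik, if_pos hjk, add_zero, zero_add]
      try module
    · simp only [if_neg hik, if_neg hjk, add_zero]; module
  -- scalar key identity
  have key : ∀ j, j ≠ i →
      (z i - z j)⁻¹ * ((w - z i)⁻¹ - (w - z j)⁻¹) = (w - z i)⁻¹ * (w - z j)⁻¹ := by
    intro j hj
    have h1 := hzz j hj; have h2 := hwz i; have h3 := hwz j
    field_simp
    try ring
  have hB : ∑ j ∈ univ.erase i, lam j * (w - z j)⁻¹ = -(lam i * (w - z i)⁻¹) := by
    have h := hBethe
    simp only [div_eq_mul_inv] at h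
    rw [← Finset.sum_erase_add _ _ (Finset.mem_univ i)] at h
    exact eq_neg_of_add_eq_zero_left h
  have e3 : (∑ j ∈ univ.erase i, lam i * lam j * (z i - z j)⁻¹)
      = lam i * ∑ j ∈ univ.erase i, lam j * (z i - z j)⁻¹ := by
    rw [Finset.mul_sum]; exact Finset.sum_congr rfl fun j _ => by ring
  -- expand the left side
  rw [LinearMap.sum_apply]
  have hstep : ∀ j ∈ univ.erase i,
      ((z i - z j)⁻¹ • ((2 : ℂ)⁻¹ • (H i * H j) + E i * F j + F i * E j))
        (∑ k, (w - z k)⁻¹ • F k v₀)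
      = ∑ k, (((z i - z j)⁻¹ * ((w - z k)⁻¹ *
              ((2 : ℂ)⁻¹ * ((lam i - if i = k then 2 else 0) *
                (lam j - if j = k then 2 else 0))))) • F k v₀
          + (if i = k then ((z i - z j)⁻¹ * ((w - z k)⁻¹ * lam k)) • F j v₀ else 0)
          + (if j = k then ((z i - z j)⁻¹ * ((w - z k)⁻¹ * lam k)) • F i v₀ else 0)) := by
    intro j hj
    rw [LinearMap.smul_apply, map_sum, Finset.smul_sum]
    refine Finset.sum_congr rfl fun k _ => ?_
    rw [map_smul, hG j (Finset.mem_erase.mp hj).1 k]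
    simp only [smul_add, smul_ite, smul_zero, smul_smul]
  rw [Finset.sum_congr rfl hstep]
  simp only [Finset.sum_add_distrib]
  have hY : ∀ j ∈ univ.erase i,
      (∑ k, if i = k then ((z i - z j)⁻¹ * ((w - z k)⁻¹ * lam k)) • F j v₀ else 0)
      = ((z i - z j)⁻¹ * ((w - z i)⁻¹ * lam i)) • F j v₀ := by
    intro j _
    rw [Finset.sum_ite_eq]
    simp
  have hZ : ∀ j ∈ univ.erase i,
      (∑ k, if j = k then ((z i - z j)⁻¹ * ((w - z k)⁻¹ * lam k)) • F i v₀ else 0)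
      = ((z i - z j)⁻¹ * ((w - z j)⁻¹ * lam j)) • F i v₀ := by
    intro j _
    rw [Finset.sum_ite_eq]
    simp
  rw [Finset.sum_congr rfl hY, Finset.sum_congr rfl hZ]
  have hX : (∑ j ∈ univ.erase i, ∑ k : Fin N,
        ((z i - z j)⁻¹ * ((w - z k)⁻¹ *
          ((2 : ℂ)⁻¹ * ((lam i - if i = k then 2 else 0) *
            (lam j - if j = k then 2 else 0))))) • F k v₀)
      = ∑ k : Fin N, (∑ j ∈ univ.erase i,
          (z i - z j)⁻¹ * ((w - z k)⁻¹ *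
            ((2 : ℂ)⁻¹ * ((lam i - if i = k then 2 else 0) *
              (lam j - if j = k then 2 else 0))))) • F k v₀ := by
    rw [Finset.sum_comm]
    exact Finset.sum_congr rfl fun k _ => (Finset.sum_smul).symm
  rw [hX]
  have hY2 : (∑ j ∈ univ.erase i, ((z i - z j)⁻¹ * ((w - z i)⁻¹ * lam i)) • F j v₀)
      = ∑ k : Fin N, if k = i then 0 else
          ((z i - z k)⁻¹ * ((w - z i)⁻¹ * lam i)) • F k v₀ := by
    rw [← Finset.sum_subset (Finset.subset_univ (univ.erase i))
      (fun x _ hx => by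
        have hxi : x = i := by simpa using hx
        rw [if_pos hxi])]
    exact Finset.sum_congr rfl fun j hj => (if_neg (Finset.mem_erase.mp hj).1).symm
  have hZ2 : (∑ j ∈ univ.erase i, ((z i - z j)⁻¹ * ((w - z j)⁻¹ * lam j)) • F i v₀)
      = ∑ k : Fin N, if k = i then
          (∑ j ∈ univ.erase i, ((z i - z j)⁻¹ * ((w - z j)⁻¹ * lam j)) • F i v₀) else 0 := by
    rw [Finset.sum_ite_eq']
    simp
  rw [hY2, hZ2, Finset.smul_sum, ← Finset.sum_add_distrib, ← Finset.sum_add_distrib]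
  refine Finset.sum_congr rfl fun k _ => ?_
  by_cases hk : k = i
  · subst hk
    simp only [eq_self_iff_true, if_true, add_zero]
    rw [← Finset.sum_smul, smul_smul, ← add_smul]
    congr 1
    simp only [div_eq_mul_inv]
    have e1 : (∑ j ∈ univ.erase k, (z k - z j)⁻¹ * ((w - z k)⁻¹ *
          ((2 : ℂ)⁻¹ * ((lam k - 2) *
            (lam j - if j = k then 2 else 0)))))
        = ((w - z k)⁻¹ * ((2 : ℂ)⁻¹ * (lam k - 2))) *
            ∑ j ∈ univ.erase k, lam j * (z k - z j)⁻¹ := by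
      rw [Finset.mul_sum]
      refine Finset.sum_congr rfl fun j hj => ?_
      rw [if_neg (Finset.mem_erase.mp hj).1]
      ring
    have e2 : (∑ j ∈ univ.erase k, (z k - z j)⁻¹ * ((w - z j)⁻¹ * lam j))
        = (w - z k)⁻¹ * (∑ j ∈ univ.erase k, lam j * (z k - z j)⁻¹)
          - (w - z k)⁻¹ * (∑ j ∈ univ.erase k, lam j * (w - z j)⁻¹) := by
      rw [Finset.mul_sum, Finset.mul_sum, ← Finset.sum_sub_distrib]
      refine Finset.sum_congr rfl fun j hj => ?_
      have hkey := key j (Finset.mem_erase.mp hj).1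
      linear_combination (-(lam j)) * hkey
    rw [e1, e2, e3, hB]
    ring
  · simp only [if_neg hk]
    rw [add_zero, smul_smul, ← add_smul]
    congr 1
    simp only [div_eq_mul_inv]
    have hik' : ¬ i = k := fun h => hk h.symm
    have e4 : (∑ j ∈ univ.erase i, (z i - z j)⁻¹ * ((w - z k)⁻¹ *
          ((2 : ℂ)⁻¹ * ((lam i - if i = k then 2 else 0) *
            (lam j - if j = k then 2 else 0)))))
        = ((w - z k)⁻¹ * ((2 : ℂ)⁻¹ * lam i)) *
            (∑ j ∈ univ.erase i, lam j * (z i - z j)⁻¹)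
          - (z i - z k)⁻¹ * (lam i * (w - z k)⁻¹) := by
      have expand : ∀ j ∈ univ.erase i,
          (z i - z j)⁻¹ * ((w - z k)⁻¹ *
            ((2 : ℂ)⁻¹ * ((lam i - if i = k then 2 else 0) *
              (lam j - if j = k then 2 else 0))))
          = ((w - z k)⁻¹ * ((2 : ℂ)⁻¹ * lam i)) * (lam j * (z i - z j)⁻¹)
            - (if j = k then (z i - z j)⁻¹ * (lam i * (w - z k)⁻¹) else 0) := by
        intro j _
        rw [if_neg hik']
        by_cases hjk : j = k
        · rw [if_pos hjk, if_pos hjk]; ring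
        · rw [if_neg hjk, if_neg hjk]; ring
      rw [Finset.sum_congr rfl expand, Finset.sum_sub_distrib, ← Finset.mul_sum,
        Finset.sum_ite_eq', if_pos (Finset.mem_erase.mpr ⟨hk, Finset.mem_univ k⟩)]
    rw [e4, e3]
    have k2 := key k hk
    linear_combination lam i * k2
end

section
/- If w satisfies the Bethe equation Σ_{k=1}^N λ_k/(w - z_k) = 0, then the Bethe vector ψ_1(w) = Σ_{k=1}^N F^{(k)} v_0/(w - z_k) is singular, i.e., E ψ_1(w) = 0 where E = Σ_{k=1}^N E^{(k)}. -/
/-- If `w` satisfies the Bethe equation `Σ_k λ_k/(w-z_k) = 0`, then the Bethe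
vector `ψ_1(w) = Σ_k F^(k) v_0/(w-z_k)` is singular: `E ψ_1(w) = 0` for the
total raising operator `E = Σ_k E^(k)`. -/
theorem bethe_vector_one_singular {N : ℕ} (Ω : Type*) [AddCommGroup Ω] [Module ℂ Ω]
    (z : Fin N → ℂ) (hz : Function.Injective z) (w : ℂ) (hw : ∀ k, w ≠ z k)
    (lam : Fin N → ℂ) (v₀ : Ω)
    (H E F : Fin N → Module.End ℂ Ω)
    (hEF : ∀ j k, E j * F k - F k * E j = if j = k then H k else 0)
    (hHv : ∀ k, H k v₀ = lam k • v₀)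
    (hEv : ∀ k, E k v₀ = 0)
    (hBethe : ∑ k, lam k / (w - z k) = 0) :
    (∑ k, E k) (∑ k, (w - z k)⁻¹ • F k v₀) = 0 := by
  have key : ∀ j k, E j (F k v₀) = (if j = k then lam k else 0) • v₀ := by
    intro j k
    have h := congrArg (fun (T : Module.End ℂ Ω) => T v₀) (hEF j k)
    simp only [LinearMap.sub_apply, Module.End.mul_apply, hEv, map_zero] at h
    rw [sub_zero] at h
    split_ifs with hh
    · simpa [hh, hHv k] using h
    · simpa [hh] using h
  rw [LinearMap.sum_apply]
  have : ∀ j, E j (∑ k, (w - z k)⁻¹ • F k v₀) = (w - z j)⁻¹ • lam j • v₀ := by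
    intro j
    rw [map_sum]
    simp only [map_smul, key]
    rw [Finset.sum_eq_single j]
    · simp
    · intro b _ hb
      simp [(Ne.symm hb)]
    · simp
  simp only [this]
  have : ∑ j, (w - z j)⁻¹ • lam j • v₀ = (∑ j, lam j / (w - z j)) • v₀ := by
    rw [Finset.sum_smul]
    congr 1
    ext j
    rw [smul_smul, div_eq_mul_inv, mul_comm]
  rw [this, hBethe, zero_smul]
end

section
/- If (w_1, w_2) satisfy the Bethe equations Σ_k λ_k/(w_1 - z_k) + 2/(w_2 - w_1) = 0 and Σ_k λ_k/(w_2 - z_k) + 2/(w_1 - w_2) = 0, then E ψ_2 = 0, where ψ_2 = F(w_1) F(w_2) v_0, F(w) = Σ_k F^{(k)}/(w - z_k), and E = Σ_k E^{(k)}. -/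
/-- If `(w_1, w_2)` satisfy the Bethe equations
`Σ_k λ_k/(w_1-z_k) + 2/(w_2-w_1) = 0` and `Σ_k λ_k/(w_2-z_k) + 2/(w_1-w_2) = 0`,
then `E ψ_2 = 0`, where `ψ_2 = F(w_1) F(w_2) v_0`, `F(w) = Σ_k F^(k)/(w-z_k)`,
and `E = Σ_k E^(k)`. -/
theorem bethe_vector_two_singular {N : ℕ} (Ω : Type*) [AddCommGroup Ω] [Module ℂ Ω]
    (z : Fin N → ℂ) (hz : Function.Injective z)
    (w₁ w₂ : ℂ) (hw₁ : ∀ k, w₁ ≠ z k) (hw₂ : ∀ k, w₂ ≠ z k) (hww : w₁ ≠ w₂)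
    (lam : Fin N → ℂ) (v₀ : Ω)
    (H E F : Fin N → Module.End ℂ Ω)
    (hHEk : ∀ k, H k * E k - E k * H k = (2 : ℂ) • E k)
    (hHFk : ∀ k, H k * F k - F k * H k = (-2 : ℂ) • F k)
    (hEFk : ∀ k, E k * F k - F k * E k = H k)
    (hcross : ∀ k l, k ≠ l →
      Commute (H k) (H l) ∧ Commute (H k) (E l) ∧ Commute (H k) (F l) ∧
      Commute (E k) (E l) ∧ Commute (E k) (F l) ∧ Commute (F k) (F l))
    (hHv : ∀ k, H k v₀ = lam k • v₀)
    (hEv : ∀ k, E k v₀ = 0)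
    (hBethe₁ : (∑ k, lam k / (w₁ - z k)) + 2 / (w₂ - w₁) = 0)
    (hBethe₂ : (∑ k, lam k / (w₂ - z k)) + 2 / (w₁ - w₂) = 0) :
    (∑ k, E k)
      ((∑ k, (w₁ - z k)⁻¹ • F k) ((∑ k, (w₂ - z k)⁻¹ • F k) v₀)) = 0 := by
  classical
  have hzw₁ : ∀ k, w₁ - z k ≠ 0 := fun k => sub_ne_zero.mpr (hw₁ k)
  have hzw₂ : ∀ k, w₂ - z k ≠ 0 := fun k => sub_ne_zero.mpr (hw₂ k)
  have hw12 : w₁ - w₂ ≠ 0 := sub_ne_zero.mpr hww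
  have hw21 : w₂ - w₁ ≠ 0 := sub_ne_zero.mpr (Ne.symm hww)
  set a : Fin N → ℂ := fun k => (w₁ - z k)⁻¹ with ha
  set b : Fin N → ℂ := fun k => (w₂ - z k)⁻¹ with hb
  set u : Fin N → Ω := fun k => F k v₀ with hu
  -- action of E j on F l v₀
  have hA : ∀ j l : Fin N, E j (F l v₀) = (if j = l then lam l • v₀ else 0) := by
    intro j l
    by_cases h : j = l
    · subst h
      have h1 := congrArg (fun T : Module.End ℂ Ω => T v₀) (hEFk j)
      simp only [LinearMap.sub_apply, Module.End.mul_apply, hEv, map_zero, sub_zero, hHv] at h1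
      simp [h1]
    · have h1 := congrArg (fun T : Module.End ℂ Ω => T v₀) ((hcross j l h).2.2.2.2.1).eq
      simp only [Module.End.mul_apply, hEv, map_zero] at h1
      simp [h, h1]
  -- action of H j on F l v₀
  have hB : ∀ j l : Fin N, H j (F l v₀) =
      lam j • F l v₀ + (if j = l then ((-2 : ℂ) • F l v₀) else 0) := by
    intro j l
    by_cases h : j = l
    · subst h
      have h1 := congrArg (fun T : Module.End ℂ Ω => T v₀) (hHFk j)
      simp only [LinearMap.sub_apply, Module.End.mul_apply, LinearMap.smul_apply, hHv,
        map_smul] at h1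
      have h2 := sub_eq_iff_eq_add.mp h1
      simp [h2, add_comm]
    · have h1 := congrArg (fun T : Module.End ℂ Ω => T v₀) ((hcross j l h).2.2.1).eq
      simp only [Module.End.mul_apply, hHv, map_smul] at h1
      simp [h, h1]
  -- action of E j on F k (F l v₀)
  have hC : ∀ j k l : Fin N, E j (F k (F l v₀)) =
      (if j = l then lam l • F k v₀ else 0) +
      (if j = k then lam k • F l v₀ + (if k = l then ((-2 : ℂ) • F l v₀) else 0) else 0) := by
    intro j k l
    by_cases h : j = k
    · subst h
      have h1 := congrArg (fun T : Module.End ℂ Ω => T (F l v₀)) (hEFk j)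
      simp only [LinearMap.sub_apply, Module.End.mul_apply] at h1
      have h2 : E j (F j (F l v₀)) = F j (E j (F l v₀)) + H j (F l v₀) := by
        rw [← h1]; abel
      rw [h2, hA, hB]
      by_cases h3 : j = l <;> simp [h3]
    · have h1 := congrArg (fun T : Module.End ℂ Ω => T (F l v₀)) ((hcross j k h).2.2.2.2.1).eq
      simp only [Module.End.mul_apply] at h1
      rw [h1, hA]
      by_cases h3 : j = l
      · subst h3; simp [h]
      · simp [h, h3]
  -- summed version
  have key : ∀ k l : Fin N, (∑ j, E j (F k (F l v₀))) =
      lam l • u k + lam k • u l + (if k = l then (-2 : ℂ) else 0) • u l := by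
    intro k l
    simp only [hC, Finset.sum_add_distrib, Finset.sum_ite_eq', Finset.mem_univ, if_true]
    by_cases h : k = l <;> simp [h, hu] <;> abel
  -- scalar coefficients
  set Λ₁ : ℂ := ∑ k, lam k * a k with hΛ₁def
  set Λ₂ : ℂ := ∑ k, lam k * b k with hΛ₂def
  have hΛ₁ : Λ₁ = 2 / (w₁ - w₂) := by
    have h0 : Λ₁ = ∑ k, lam k / (w₁ - z k) := by
      simp [hΛ₁def, ha, div_eq_mul_inv]
    have h1 := eq_neg_of_add_eq_zero_left hBethe₁
    rw [h0, h1]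
    rw [show w₂ - w₁ = -(w₁ - w₂) by ring, div_neg, neg_neg]
  have hΛ₂ : Λ₂ = -(2 / (w₁ - w₂)) := by
    have h0 : Λ₂ = ∑ k, lam k / (w₂ - z k) := by
      simp [hΛ₂def, hb, div_eq_mul_inv]
    rw [h0, eq_neg_of_add_eq_zero_left hBethe₂]
  have hcoef : ∀ k, a k * Λ₂ + Λ₁ * b k + a k * b k * (-2) = 0 := by
    intro k
    rw [hΛ₁, hΛ₂, ha, hb]
    have h1 := hzw₁ k
    have h2 := hzw₂ k
    field_simp
    ring
  -- main computation
  have T1 : ∀ k, (∑ l, (a k * b l * lam l) • u k) = (a k * Λ₂) • u k := by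
    intro k
    rw [← Finset.sum_smul]
    congr 1
    rw [hΛ₂def, Finset.mul_sum]
    exact Finset.sum_congr rfl fun l _ => by ring
  have T2 : ∀ l, (∑ k, (a k * b l * lam k) • u l) = (Λ₁ * b l) • u l := by
    intro l
    rw [← Finset.sum_smul]
    congr 1
    rw [hΛ₁def, Finset.sum_mul]
    exact Finset.sum_congr rfl fun k _ => by ring
  have T3 : ∀ k, (∑ l, (a k * b l * (if k = l then (-2 : ℂ) else 0)) • u l)
      = (a k * b k * (-2)) • u k := by
    intro k
    rw [Finset.sum_eq_single k]
    · simp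
    · intro l _ hl
      simp [Ne.symm hl]
    · intro h
      exact absurd (Finset.mem_univ k) h
  have step1 : (∑ k : Fin N, a k • F k) ((∑ l : Fin N, b l • F l) v₀)
      = ∑ k, ∑ l, (a k * b l) • F k (F l v₀) := by
    simp only [LinearMap.sum_apply, LinearMap.smul_apply, map_sum, map_smul, Finset.smul_sum,
      smul_smul]
    rw [Finset.sum_comm]
    exact Finset.sum_congr rfl fun k _ => Finset.sum_congr rfl fun l _ => by rw [mul_comm]
  have step2 : (∑ j, E j) (∑ k, ∑ l, (a k * b l) • F k (F l v₀))
      = ∑ k, ∑ l, (a k * b l) • (∑ j, E j (F k (F l v₀))) := by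
    simp only [LinearMap.sum_apply, map_sum, map_smul, Finset.smul_sum]
  show (∑ j, E j) ((∑ k, a k • F k) ((∑ l, b l • F l) v₀)) = 0
  rw [step1, step2]
  simp only [key, smul_add, smul_smul, Finset.sum_add_distrib]
  rw [Finset.sum_congr rfl fun k _ => T1 k,
    show (∑ k, ∑ l, (a k * b l * lam k) • u l) = ∑ l, (Λ₁ * b l) • u l from
      (Finset.sum_comm).trans (Finset.sum_congr rfl fun l _ => T2 l),
    Finset.sum_congr rfl fun k _ => T3 k]
  rw [← Finset.sum_add_distrib, ← Finset.sum_add_distrib]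
  refine Finset.sum_eq_zero fun k _ => ?_
  rw [← add_smul, ← add_smul, hcoef k, zero_smul]
end
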